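/- For every s ∈ ℂ with Re(s) > 1, one has the identity Σ_{α ≥ 1, α odd} μ(α) · Σ_{d ≥ 1, d odd, α² | d} φ(d)/d^{1+s} = (ζ(s)/ζ(1+s)) · ((1 − 2^{−s})/(1 − 2^{−s−1})) · ∏_{p odd prime} (1 − p^{−s−1} − p^{−2s}(1 − p^{−1}))·(1 − p^{−s−1})^{−1}; all the series and the product converge absolutely in this region. -/

import Mathlib

open ArithmeticFunction ArithmeticFunction.Moebius in
lemma key_moebius_sq (d : ℕ) (hd : d ≠ 0) :
    ∑ α ∈ d.divisors.filter (fun α => α ^ 2 ∣ d), (μ α : ℤ)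
      = if Squarefree d then 1 else 0 := by
  set A : ℕ := ∏ p ∈ d.primeFactors, p ^ (d.factorization p / 2) with hA
  have hA0 : A ≠ 0 := by
    rw [hA]
    exact Finset.prod_ne_zero_iff.mpr fun p hp =>
      pow_ne_zero _ (Nat.pos_of_mem_primeFactors hp).ne'
  have hAfact : ∀ q, A.factorization q = d.factorization q / 2 := by
    intro q
    rw [hA, Nat.factorization_prod
      (fun p hp => pow_ne_zero _ (Nat.pos_of_mem_primeFactors hp).ne')]
    rw [Finset.sum_apply']
    have : ∀ p ∈ d.primeFactors,
        (p ^ (d.factorization p / 2)).factorization q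
          = if p = q then d.factorization p / 2 else 0 := by
      intro p hp
      rw [(Nat.prime_of_mem_primeFactors hp).factorization_pow]
      simp [Finsupp.single_apply]
    rw [Finset.sum_congr rfl this, Finset.sum_ite_eq']
    by_cases hq : q ∈ d.primeFactors
    · simp [hq]
    · simp only [hq, if_false]
      rw [← Nat.support_factorization, Finsupp.notMem_support_iff] at hq
      simp [hq]
  have hdvd : ∀ α : ℕ, α ^ 2 ∣ d ↔ α ∣ A := by
    intro α
    rcases eq_or_ne α 0 with rfl | hα
    · simp [zero_pow, zero_dvd_iff, hd, hA0]
    · rw [← Nat.factorization_le_iff_dvd hα hA0,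
        ← Nat.factorization_le_iff_dvd (pow_ne_zero 2 hα) hd,
        Nat.factorization_pow, Finsupp.le_def, Finsupp.le_def]
      constructor
      · intro h q
        have := h q
        simp only [Finsupp.smul_apply, smul_eq_mul] at this
        rw [hAfact]
        omega
      · intro h q
        have := h q
        rw [hAfact] at this
        simp only [Finsupp.smul_apply, smul_eq_mul]
        omega
  have hsf : Squarefree d ↔ A = 1 := by
    constructor
    · intro h
      rw [hA]
      apply Finset.prod_eq_one
      intro p hp
      have := (Nat.squarefree_iff_factorization_le_one hd).mp h p
      have : d.factorization p / 2 = 0 := by omega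
      simp [this]
    · intro h
      rw [Nat.squarefree_iff_factorization_le_one hd]
      intro p
      have := hAfact p
      rw [h, Nat.factorization_one] at this
      simp only [Finsupp.coe_zero, Pi.zero_apply] at this
      omega
  have hset : d.divisors.filter (fun α => α ^ 2 ∣ d) = A.divisors := by
    ext α
    rw [Finset.mem_filter, Nat.mem_divisors, Nat.mem_divisors]
    constructor
    · rintro ⟨⟨h1, -⟩, h2⟩
      exact ⟨(hdvd α).mp h2, hA0⟩
    · rintro ⟨h1, -⟩
      have h2 := (hdvd α).mpr h1
      exact ⟨⟨dvd_trans (dvd_pow_self α two_ne_zero) h2, hd⟩, h2⟩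
  rw [hset]
  have := congrArg (fun f : ArithmeticFunction ℤ => f A) moebius_mul_coe_zeta
  simp only [coe_mul_zeta_apply, one_apply] at this
  rw [this]
  simp [hsf]

lemma S1 {r : ℝ} (hr : 1 < r) : Summable (fun n : ℕ => (n : ℝ) ^ (-r)) :=
  Real.summable_nat_rpow.mpr (by linarith)

lemma norm_totient_div_le (s : ℂ) {d : ℕ} (hd : d ≠ 0) :
    ‖(Nat.totient d : ℂ) / (d : ℂ) ^ ((1 : ℂ) + s)‖ ≤ (d : ℝ) ^ (-s.re) := by
  have hd0 : 0 < d := Nat.pos_of_ne_zero hd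
  have hd0' : (0 : ℝ) < d := by exact_mod_cast hd0
  rw [norm_div, Complex.norm_natCast_cpow_of_pos hd0]
  have h1 : ‖(Nat.totient d : ℂ)‖ = (Nat.totient d : ℝ) := by
    simp
  rw [h1, div_le_iff₀ (Real.rpow_pos_of_pos hd0' _)]
  have h2 : (d : ℝ) ^ (-s.re) * (d : ℝ) ^ (((1 : ℂ) + s).re) = (d : ℝ) ^ (1 : ℝ) := by
    rw [← Real.rpow_add hd0']
    norm_num [Complex.add_re]
  rw [h2, Real.rpow_one]
  exact_mod_cast Nat.totient_le d

noncomputable def bfun (r : ℝ) (α d : ℕ) : ℝ :=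
  if α ^ 2 ∣ d ∧ d ≠ 0 then (d : ℝ) ^ (-r) else 0

lemma bfun_nonneg (r : ℝ) (α d : ℕ) : 0 ≤ bfun r α d := by
  unfold bfun; split
  · positivity
  · exact le_rfl

lemma bfun_le (r : ℝ) (α d : ℕ) : bfun r α d ≤ (d : ℝ) ^ (-r) := by
  unfold bfun; split
  · exact le_rfl
  · positivity

lemma summable_bfun {r : ℝ} (hr : 1 < r) (α : ℕ) : Summable (bfun r α) :=
  Summable.of_nonneg_of_le (bfun_nonneg r α) (bfun_le r α) (S1 hr)

lemma tsum_bfun_le {r : ℝ} (hr : 1 < r) (α : ℕ) :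
    ∑' d : ℕ, bfun r α d ≤ ((α : ℝ) ^ 2) ^ (-r) * (∑' n : ℕ, (n : ℝ) ^ (-r)) := by
  rcases eq_or_ne α 0 with rfl | hα
  · have h0 : ∀ d : ℕ, bfun r 0 d = 0 := by
      intro d
      unfold bfun
      rw [if_neg]
      rintro ⟨h1, h2⟩
      rw [zero_pow two_ne_zero, zero_dvd_iff] at h1
      exact h2 h1
    simp only [h0, tsum_zero]
    have : ((0 : ℕ) : ℝ) ^ 2 = (0 : ℝ) := by norm_num
    rw [this, Real.zero_rpow (by linarith : -r ≠ 0), zero_mul]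
  · have hα2 : 0 < α ^ 2 := Nat.pos_of_ne_zero (pow_ne_zero _ hα)
    have hinj : Function.Injective (fun m : ℕ => α ^ 2 * m) := fun a b h => by
      exact Nat.eq_of_mul_eq_mul_left hα2 h
    have hsupp : ∀ d ∉ Set.range (fun m : ℕ => α ^ 2 * m), bfun r α d = 0 := by
      intro d hdr
      unfold bfun
      rw [if_neg]
      rintro ⟨⟨c, rfl⟩, -⟩
      exact hdr ⟨c, rfl⟩
    rw [← Function.Injective.tsum_eq hinj (Function.support_subset_iff'.mpr hsupp)]
    have hptle : ∀ m : ℕ, bfun r α (α ^ 2 * m) ≤ ((α : ℝ) ^ 2) ^ (-r) * (m : ℝ) ^ (-r) := by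
      intro m
      rcases eq_or_ne m 0 with rfl | hm
      · rw [Nat.cast_zero, Real.zero_rpow (by linarith : -r ≠ 0), mul_zero, mul_zero]
        unfold bfun
        rw [if_neg (by simp)]
      · unfold bfun
        rw [if_pos ⟨⟨m, rfl⟩, by positivity⟩]
        rw [show ((α ^ 2 * m : ℕ) : ℝ) = ((α : ℝ) ^ 2) * (m : ℝ) by push_cast; ring]
        rw [Real.mul_rpow (by positivity) (by positivity)]
    exact le_trans (Summable.tsum_le_tsum hptle ((summable_bfun hr α).comp_injective hinj)
        (((S1 hr).mul_left _)))
      (le_of_eq (tsum_mul_left))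

lemma inner_norm_le (s : ℂ) (α d : ℕ) :
    ‖if Odd d ∧ α ^ 2 ∣ d then (Nat.totient d : ℂ) / (d : ℂ) ^ ((1 : ℂ) + s) else 0‖
      ≤ bfun s.re α d := by
  split
  next h =>
    have hd : d ≠ 0 := by
      intro h0
      rw [h0] at h
      exact (Nat.not_odd_iff_even.mpr Even.zero) h.1
    have : bfun s.re α d = (d : ℝ) ^ (-s.re) := if_pos ⟨h.2, hd⟩
    rw [this]
    exact norm_totient_div_le s hd
  next => simpa using bfun_nonneg s.re α d

lemma norm_moebius_le_one (n : ℕ) : ‖((ArithmeticFunction.moebius n : ℤ) : ℂ)‖ ≤ 1 := by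
  by_cases h : Squarefree n
  · have := ArithmeticFunction.abs_moebius_eq_one_of_squarefree h
    have h2 : ‖((ArithmeticFunction.moebius n : ℤ) : ℂ)‖ = |(ArithmeticFunction.moebius n : ℝ)| := by
      rw [show ((ArithmeticFunction.moebius n : ℤ) : ℂ) = (((ArithmeticFunction.moebius n : ℤ) : ℝ) : ℂ) by push_cast; ring]
      rw [Complex.norm_real, Real.norm_eq_abs]
    rw [h2, show |(ArithmeticFunction.moebius n : ℝ)| = ((|ArithmeticFunction.moebius n| : ℤ) : ℝ) by push_cast; ring, this]
    norm_num
  · simp [ArithmeticFunction.moebius_eq_zero_of_not_squarefree h]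

open ArithmeticFunction

noncomputable def oddCpow (s : ℂ) : ℕ →*₀ ℂ where
  toFun n := if Odd n then (n : ℂ) ^ (-s) else 0
  map_zero' := by norm_num [Nat.odd_iff]
  map_one' := by norm_num
  map_mul' m n := by
    by_cases hm : Odd m
    · by_cases hn : Odd n
      · simp only [Nat.odd_mul, hm, hn, and_self, if_true]
        rw [show ((m * n : ℕ) : ℂ) = (((m : ℝ)) : ℂ) * (((n : ℝ)) : ℂ) by push_cast; ring,
          Complex.mul_cpow_ofReal_nonneg (Nat.cast_nonneg m) (Nat.cast_nonneg n)]
        norm_num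
      · simp [Nat.odd_mul, hm, hn]
    · simp [Nat.odd_mul, hm]

lemma oddCpow_apply (s : ℂ) (n : ℕ) : oddCpow s n = if Odd n then (n : ℂ) ^ (-s) else 0 := rfl

lemma summable_norm_oddCpow {s : ℂ} (hs : 1 < s.re) :
    Summable (fun n : ℕ => ‖oddCpow s n‖) := by
  apply Summable.of_nonneg_of_le (fun n => norm_nonneg _) _
    (Real.summable_nat_rpow.mpr (by linarith : -s.re < -1))
  intro n
  rw [oddCpow_apply]
  split
  next h =>
    have hn : 0 < n := Nat.pos_of_ne_zero
      (by rintro rfl; exact (Nat.not_odd_iff_even.mpr Even.zero) h)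
    rw [Complex.norm_natCast_cpow_of_pos hn, Complex.neg_re]
  next => rw [norm_zero]; positivity

def inclO : {p : ℕ // p.Prime ∧ Odd p} → Nat.Primes := fun q => ⟨q.1, q.2.1⟩

lemma inclO_inj : Function.Injective inclO := by
  intro a b h
  apply Subtype.ext
  exact congrArg (fun p : Nat.Primes => p.1) h

lemma eq_two_of_not_range (p : Nat.Primes) (hp : p ∉ Set.range inclO) : (p : ℕ) = 2 := by
  by_contra h2
  exact hp ⟨⟨p.1, p.2, p.2.odd_of_ne_two h2⟩, rfl⟩

lemma hasProd_odd_restrict {f : Nat.Primes → ℂ} {g : {p : ℕ // p.Prime ∧ Odd p} → ℂ}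
    {a : ℂ} (h : HasProd f a)
    (h2 : ∀ p : Nat.Primes, (p : ℕ) = 2 → f p = 1)
    (hg : ∀ q, f (inclO q) = g q) : HasProd g a := by
  have h' := (inclO_inj.hasProd_iff (fun p hp => h2 p (eq_two_of_not_range p hp))).mpr h
  rwa [(funext hg : f ∘ inclO = g)] at h'

noncomputable def Zodd (s : ℂ) : ℂ := ∑' n : ℕ, (if Odd n then (n : ℂ) ^ (-s) else 0)

lemma hasProd_Zodd {s : ℂ} (hs : 1 < s.re) :
    HasProd (fun q : {p : ℕ // p.Prime ∧ Odd p} => (1 - (q.1 : ℂ) ^ (-s))⁻¹) (Zodd s) := by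
  have h := EulerProduct.eulerProduct_completely_multiplicative_hasProd
    (summable_norm_oddCpow hs)
  exact hasProd_odd_restrict h (fun p hp => by
    rw [oddCpow_apply, if_neg (by rw [hp]; norm_num), sub_zero, inv_one])
    (fun q => by
      show (1 - oddCpow s q.1)⁻¹ = _
      rw [oddCpow_apply, if_pos q.2.2])

lemma tsum_pow_eq {f : ℕ → ℂ} {p : ℕ} (h2 : ∀ e, 2 ≤ e → f (p ^ e) = 0) :
    ∑' e : ℕ, f (p ^ e) = f 1 + f p := by
  rw [tsum_eq_sum (s := Finset.range 2) (f := fun e => f (p ^ e))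
    (fun e he => h2 e (by simpa using Nat.not_lt.mp (fun hlt => he (Finset.mem_range.mpr hlt))))]
  rw [Finset.sum_range_succ, Finset.sum_range_one, pow_zero, pow_one]

lemma not_squarefree_pp {p e : ℕ} (hp : p.Prime) (he : 2 ≤ e) : ¬ Squarefree (p ^ e) := by
  intro h
  have := h p ((sq p).symm ▸ pow_dvd_pow p he)
  exact hp.one_lt.ne' (Nat.isUnit_iff.mp this)

noncomputable def modd (s : ℂ) (n : ℕ) : ℂ :=
  if Odd n then (moebius n : ℂ) * (n : ℂ) ^ (-s) else 0

lemma modd_mul (s : ℂ) {m n : ℕ} (h : m.Coprime n) :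
    modd s (m * n) = modd s m * modd s n := by
  by_cases hm : Odd m
  · by_cases hn : Odd n
    · simp only [modd, Nat.odd_mul, hm, hn, and_self, if_true]
      have hmu : (moebius (m * n) : ℂ) = (moebius m : ℂ) * moebius n := by
        rw [isMultiplicative_moebius.map_mul_of_coprime h]; push_cast; ring
      rw [hmu, show ((m * n : ℕ) : ℂ) = (((m : ℝ)) : ℂ) * (((n : ℝ)) : ℂ) by push_cast; ring,
        Complex.mul_cpow_ofReal_nonneg (Nat.cast_nonneg m) (Nat.cast_nonneg n)]
      push_cast; ring
    · simp [modd, Nat.odd_mul, hm, hn]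
  · simp [modd, Nat.odd_mul, hm]

lemma summable_norm_modd {s : ℂ} (hs : 1 < s.re) :
    Summable (fun n : ℕ => ‖modd s n‖) := by
  apply Summable.of_nonneg_of_le (fun n => norm_nonneg _) _
    (Real.summable_nat_rpow.mpr (by linarith : -s.re < -1))
  intro n
  unfold modd
  split
  next h =>
    have hn : 0 < n := Nat.pos_of_ne_zero
      (by rintro rfl; exact (Nat.not_odd_iff_even.mpr Even.zero) h)
    rw [norm_mul, Complex.norm_natCast_cpow_of_pos hn, Complex.neg_re]
    calc ‖(moebius n : ℂ)‖ * (n : ℝ) ^ (-s.re)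
        ≤ 1 * (n : ℝ) ^ (-s.re) := by
          apply mul_le_mul_of_nonneg_right (norm_moebius_le_one n) (by positivity)
      _ = (n : ℝ) ^ (-s.re) := one_mul _
  next => rw [norm_zero]; positivity

noncomputable def Modd (s : ℂ) : ℂ := ∑' n : ℕ, modd s n

lemma hasProd_Modd {s : ℂ} (hs : 1 < s.re) :
    HasProd (fun q : {p : ℕ // p.Prime ∧ Odd p} => 1 - (q.1 : ℂ) ^ (-s)) (Modd s) := by
  have h := EulerProduct.eulerProduct_hasProd (f := modd s)
    (by simp [modd, Complex.one_cpow]) (fun {m n} h => modd_mul s h)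
    (summable_norm_modd hs) (by simp [modd, Nat.odd_iff])
  have hfac : ∀ p : Nat.Primes, ∑' e : ℕ, modd s ((p : ℕ) ^ e) = 1 + modd s (p : ℕ) := by
    intro p
    rw [tsum_pow_eq (fun e he => ?_)]
    · congr 1
      simp [modd, Complex.one_cpow]
    · unfold modd
      split
      · rw [moebius_apply_prime_pow p.2 (by omega), if_neg (by omega)]
        simp
      · rfl
  rw [show (fun p : Nat.Primes => ∑' e : ℕ, modd s ((p : ℕ) ^ e))
      = fun p : Nat.Primes => 1 + modd s (p : ℕ) from funext hfac] at h
  exact hasProd_odd_restrict h (fun p hp => by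
    have ho2 : ¬ Odd (p : ℕ) := by rw [hp]; norm_num
    simp [modd, ho2])
    (fun q => by
      show 1 + modd s q.1 = _
      have hq : modd s q.1 = (moebius q.1 : ℂ) * (q.1 : ℂ) ^ (-s) := by
        unfold modd; rw [if_pos q.2.2]
      rw [hq, moebius_apply_prime q.2.1]
      push_cast; ring)

noncomputable def Fsq (s : ℂ) (n : ℕ) : ℂ :=
  if Squarefree n ∧ Odd n then (Nat.totient n : ℂ) / (n : ℂ) ^ ((1 : ℂ) + s) else 0

lemma Fsq_mul (s : ℂ) {m n : ℕ} (h : m.Coprime n) : Fsq s (m * n) = Fsq s m * Fsq s n := by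
  by_cases hm : Squarefree m ∧ Odd m
  · by_cases hn : Squarefree n ∧ Odd n
    · have hmn : Squarefree (m * n) ∧ Odd (m * n) := by
        rw [Nat.squarefree_mul h, Nat.odd_mul]
        exact ⟨⟨hm.1, hn.1⟩, hm.2, hn.2⟩
      unfold Fsq
      rw [if_pos hmn, if_pos hm, if_pos hn, Nat.totient_mul h,
        show ((m * n : ℕ) : ℂ) = (((m : ℝ)) : ℂ) * (((n : ℝ)) : ℂ) by push_cast; ring,
        Complex.mul_cpow_ofReal_nonneg (Nat.cast_nonneg m) (Nat.cast_nonneg n)]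
      push_cast
      rw [div_mul_div_comm]
    · unfold Fsq
      rw [if_neg hn, if_neg (by rw [Nat.squarefree_mul h, Nat.odd_mul]; tauto), mul_zero]
  · unfold Fsq
    rw [if_neg hm, if_neg (by rw [Nat.squarefree_mul h, Nat.odd_mul]; tauto), zero_mul]

lemma summable_norm_Fsq {s : ℂ} (hs : 1 < s.re) :
    Summable (fun n : ℕ => ‖Fsq s n‖) := by
  apply Summable.of_nonneg_of_le (fun n => norm_nonneg _) _
    (Real.summable_nat_rpow.mpr (by linarith : -s.re < -1))
  intro n
  unfold Fsq
  split
  next h =>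
    have hn : n ≠ 0 := by rintro rfl; exact (Nat.not_odd_iff_even.mpr Even.zero) h.2
    exact norm_totient_div_le s hn
  next => rw [norm_zero]; positivity

lemma hasProd_Fsq {s : ℂ} (hs : 1 < s.re) :
    HasProd (fun q : {p : ℕ // p.Prime ∧ Odd p} =>
      1 + (Nat.totient q.1 : ℂ) / (q.1 : ℂ) ^ ((1 : ℂ) + s)) (∑' n : ℕ, Fsq s n) := by
  have h := EulerProduct.eulerProduct_hasProd (f := Fsq s)
    (by unfold Fsq; rw [if_pos ⟨squarefree_one, odd_one⟩]; simp)
    (fun {m n} h => Fsq_mul s h) (summable_norm_Fsq hs)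
    (by unfold Fsq
        rw [if_neg]
        rintro ⟨-, h⟩
        exact (Nat.not_odd_iff_even.mpr Even.zero) h)
  have hfac : ∀ p : Nat.Primes, ∑' e : ℕ, Fsq s ((p : ℕ) ^ e) = 1 + Fsq s (p : ℕ) := by
    intro p
    rw [tsum_pow_eq (fun e he => ?_)]
    · congr 1
      unfold Fsq
      rw [if_pos ⟨squarefree_one, odd_one⟩]
      simp
    · unfold Fsq
      rw [if_neg (fun hc => not_squarefree_pp p.2 he hc.1)]
  rw [show (fun p : Nat.Primes => ∑' e : ℕ, Fsq s ((p : ℕ) ^ e))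
      = fun p : Nat.Primes => 1 + Fsq s (p : ℕ) from funext hfac] at h
  exact hasProd_odd_restrict h (fun p hp => by
    have ho2 : ¬ Odd (p : ℕ) := by rw [hp]; norm_num
    have h0 : Fsq s (p : ℕ) = 0 := by
      unfold Fsq; rw [if_neg (fun hc => ho2 hc.2)]
    rw [h0, add_zero])
    (fun q => by
      show 1 + Fsq s q.1 = _
      have hq : Fsq s q.1 = (Nat.totient q.1 : ℂ) / (q.1 : ℂ) ^ ((1 : ℂ) + s) := by
        unfold Fsq; rw [if_pos ⟨q.2.1.prime.squarefree, q.2.2⟩]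
      rw [hq])


lemma summable_norm_natCpow {w : ℂ} (hw : 1 < w.re) :
    Summable (fun n : ℕ => ‖(n : ℂ) ^ (-w)‖) := by
  apply Summable.of_nonneg_of_le (fun n => norm_nonneg _) _
    (Real.summable_nat_rpow.mpr (by linarith : -w.re < -1))
  intro n
  rcases eq_or_ne n 0 with rfl | hn
  · rw [Nat.cast_zero, Complex.zero_cpow (by intro h; apply_fun Complex.re at h; simp at h; linarith)]
    rw [norm_zero, Nat.cast_zero, Real.zero_rpow (by linarith : -w.re ≠ 0)]
  · rw [Complex.norm_natCast_cpow_of_pos (Nat.pos_of_ne_zero hn), Complex.neg_re]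

lemma Zodd_eq {w : ℂ} (hw : 1 < w.re) :
    Zodd w = (1 - (2 : ℂ) ^ (-w)) * riemannZeta w := by
  have hζ : riemannZeta w = ∑' n : ℕ, (n : ℂ) ^ (-w) := by
    rw [zeta_eq_tsum_one_div_nat_cpow hw]
    exact tsum_congr fun n => by rw [Complex.cpow_neg, one_div]
  have hsg : Summable (fun n : ℕ => (n : ℂ) ^ (-w)) :=
    (summable_norm_natCpow hw).of_norm
  have hse : Summable (fun n : ℕ => if Even n then (n : ℂ) ^ (-w) else 0) := by
    apply Summable.of_norm
    apply Summable.of_nonneg_of_le (fun n => norm_nonneg _) _ (summable_norm_natCpow hw)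
    intro n
    split
    · exact le_rfl
    · rw [norm_zero]; exact norm_nonneg _
  have hso : Summable (fun n : ℕ => if Odd n then (n : ℂ) ^ (-w) else 0) := by
    apply Summable.of_norm
    apply Summable.of_nonneg_of_le (fun n => norm_nonneg _) _ (summable_norm_natCpow hw)
    intro n
    split
    · exact le_rfl
    · rw [norm_zero]; exact norm_nonneg _
  have hsplit : ∑' n : ℕ, (n : ℂ) ^ (-w)
      = (∑' n : ℕ, if Even n then (n : ℂ) ^ (-w) else 0)
        + ∑' n : ℕ, (if Odd n then (n : ℂ) ^ (-w) else 0) := by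
    rw [← Summable.tsum_add hse hso]
    exact tsum_congr fun n => by
      by_cases h : Even n
      · rw [if_pos h, if_neg (by simpa [Nat.not_odd_iff_even] using h), add_zero]
      · rw [if_neg h, if_pos (Nat.not_even_iff_odd.mp h), zero_add]
  have heven : (∑' n : ℕ, if Even n then (n : ℂ) ^ (-w) else 0)
      = (2 : ℂ) ^ (-w) * ∑' n : ℕ, (n : ℂ) ^ (-w) := by
    have hinj : Function.Injective (fun m : ℕ => 2 * m) := fun a b h => Nat.eq_of_mul_eq_mul_left two_pos h
    have hsupp : ∀ n ∉ Set.range (fun m : ℕ => 2 * m),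
        (if Even n then (n : ℂ) ^ (-w) else 0) = 0 := by
      intro n hn
      rw [if_neg]
      rintro ⟨r, rfl⟩
      exact hn ⟨r, by ring⟩
    rw [← Function.Injective.tsum_eq hinj (Function.support_subset_iff'.mpr hsupp)]
    have hterm : ∀ m : ℕ, (if Even (2 * m) then ((2 * m : ℕ) : ℂ) ^ (-w) else 0)
        = (2 : ℂ) ^ (-w) * (m : ℂ) ^ (-w) := by
      intro m
      rw [if_pos (even_two_mul m),
        show ((2 * m : ℕ) : ℂ) = (((2 : ℝ)) : ℂ) * (((m : ℝ)) : ℂ) by push_cast; ring,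
        Complex.mul_cpow_ofReal_nonneg (by norm_num) (Nat.cast_nonneg m)]
      norm_num
    rw [tsum_congr hterm, tsum_mul_left]
  have : riemannZeta w = (2 : ℂ) ^ (-w) * riemannZeta w + Zodd w := by
    rw [hζ]
    nth_rewrite 1 [hsplit]
    rw [heven, Zodd, ← hζ]
  linear_combination -this

noncomputable def ttf (s : ℂ) (α d : ℕ) : ℂ :=
  if Odd α ∧ Odd d ∧ α ^ 2 ∣ d then
    (ArithmeticFunction.moebius α : ℂ) * ((Nat.totient d : ℂ) / (d : ℂ) ^ ((1 : ℂ) + s))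
  else 0

lemma ttf_norm_le (s : ℂ) (α d : ℕ) : ‖ttf s α d‖ ≤ bfun s.re α d := by
  unfold ttf
  split
  next h =>
    have hd : d ≠ 0 := by rintro rfl; exact (Nat.not_odd_iff_even.mpr Even.zero) h.2.1
    have hb : bfun s.re α d = (d : ℝ) ^ (-s.re) := if_pos ⟨h.2.2, hd⟩
    rw [hb, norm_mul]
    calc ‖(ArithmeticFunction.moebius α : ℂ)‖ * ‖(Nat.totient d : ℂ) / (d : ℂ) ^ ((1:ℂ)+s)‖
        ≤ 1 * (d : ℝ) ^ (-s.re) :=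
          mul_le_mul (norm_moebius_le_one α) (norm_totient_div_le s hd)
            (norm_nonneg _) zero_le_one
      _ = (d : ℝ) ^ (-s.re) := one_mul _
  next => rw [norm_zero]; exact bfun_nonneg _ _ _

theorem dirichlet_series_identity_two (s : ℂ) (hs : 1 < s.re) :
    (∀ α : ℕ, Odd α → Summable (fun d : ℕ =>
      ‖if Odd d ∧ α ^ 2 ∣ d then (Nat.totient d : ℂ) / (d : ℂ) ^ ((1 : ℂ) + s) else 0‖)) ∧
    Summable (fun α : ℕ => ‖if Odd α then (ArithmeticFunction.moebius α : ℂ) *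
        ∑' d : ℕ, (if Odd d ∧ α ^ 2 ∣ d then
          (Nat.totient d : ℂ) / (d : ℂ) ^ ((1 : ℂ) + s) else 0)
      else 0‖) ∧
    Multipliable (fun p : {p : ℕ // p.Prime ∧ Odd p} =>
      ((1 : ℂ) - (p.1 : ℂ) ^ (-s - 1) - (p.1 : ℂ) ^ (-(2 : ℂ) * s) * (1 - ((p.1 : ℂ))⁻¹)) *
        ((1 : ℂ) - (p.1 : ℂ) ^ (-s - 1))⁻¹) ∧
    (∑' α : ℕ, (if Odd α then (ArithmeticFunction.moebius α : ℂ) *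
        ∑' d : ℕ, (if Odd d ∧ α ^ 2 ∣ d then
          (Nat.totient d : ℂ) / (d : ℂ) ^ ((1 : ℂ) + s) else 0)
      else 0))
      = (riemannZeta s / riemannZeta (1 + s)) *
        ((1 - (2 : ℂ) ^ (-s)) / (1 - (2 : ℂ) ^ (-s - 1))) *
        ∏' p : {p : ℕ // p.Prime ∧ Odd p},
          (((1 : ℂ) - (p.1 : ℂ) ^ (-s - 1) - (p.1 : ℂ) ^ (-(2 : ℂ) * s) * (1 - ((p.1 : ℂ))⁻¹)) *
            ((1 : ℂ) - (p.1 : ℂ) ^ (-s - 1))⁻¹) := by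
  classical
  -- Part 1
  have part1 : ∀ α : ℕ, Summable (fun d : ℕ =>
      ‖if Odd d ∧ α ^ 2 ∣ d then (Nat.totient d : ℂ) / (d : ℂ) ^ ((1 : ℂ) + s) else 0‖) :=
    fun α => Summable.of_nonneg_of_le (fun _ => norm_nonneg _) (inner_norm_le s α)
      (summable_bfun hs α)
  set K : ℝ := ∑' n : ℕ, (n : ℝ) ^ (-s.re) with hK
  have hKs : Summable (fun α : ℕ => ((α : ℝ) ^ 2) ^ (-s.re) * K) := by
    have h1 : ∀ α : ℕ, ((α : ℝ) ^ 2) ^ (-s.re) = (α : ℝ) ^ ((2 : ℝ) * (-s.re)) := by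
      intro α
      rw [show ((α : ℝ) ^ 2) = (α : ℝ) ^ ((2 : ℕ) : ℝ) by rw [Real.rpow_natCast],
        ← Real.rpow_mul (Nat.cast_nonneg α)]
      norm_num
    simp only [h1]
    exact (Real.summable_nat_rpow.mpr (by linarith)).mul_right K
  have hTnorm : ∀ α : ℕ,
      ‖∑' d : ℕ, (if Odd d ∧ α ^ 2 ∣ d then
          (Nat.totient d : ℂ) / (d : ℂ) ^ ((1 : ℂ) + s) else 0)‖
        ≤ ((α : ℝ) ^ 2) ^ (-s.re) * K := fun α =>
    le_trans (norm_tsum_le_tsum_norm (part1 α))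
      (le_trans (Summable.tsum_le_tsum (inner_norm_le s α) (part1 α) (summable_bfun hs α))
        (tsum_bfun_le hs α))
  -- Part 2
  have part2 : Summable (fun α : ℕ => ‖if Odd α then (ArithmeticFunction.moebius α : ℂ) *
      ∑' d : ℕ, (if Odd d ∧ α ^ 2 ∣ d then
        (Nat.totient d : ℂ) / (d : ℂ) ^ ((1 : ℂ) + s) else 0)
      else 0‖) := by
    apply Summable.of_nonneg_of_le (fun _ => norm_nonneg _) _ hKs
    intro α
    split
    next =>
      rw [norm_mul]
      calc ‖(ArithmeticFunction.moebius α : ℂ)‖ *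
          ‖∑' d : ℕ, (if Odd d ∧ α ^ 2 ∣ d then
            (Nat.totient d : ℂ) / (d : ℂ) ^ ((1 : ℂ) + s) else 0)‖
          ≤ 1 * (((α : ℝ) ^ 2) ^ (-s.re) * K) :=
            mul_le_mul (norm_moebius_le_one α) (hTnorm α) (norm_nonneg _) zero_le_one
        _ = ((α : ℝ) ^ 2) ^ (-s.re) * K := one_mul _
    next =>
      rw [norm_zero]
      have hKnn : 0 ≤ K := tsum_nonneg (fun n => by positivity)
      positivity
  -- Fubini
  have tt_rows : ∀ α : ℕ, Summable (fun d => ‖ttf s α d‖) := fun α =>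
    Summable.of_nonneg_of_le (fun _ => norm_nonneg _) (ttf_norm_le s α) (summable_bfun hs α)
  have h_unc : Summable (Function.uncurry (ttf s)) := by
    apply Summable.of_norm
    apply (summable_prod_of_nonneg (fun p => norm_nonneg _)).mpr
    constructor
    · exact fun α => tt_rows α
    · apply Summable.of_nonneg_of_le
        (fun α => tsum_nonneg fun d => norm_nonneg _) _ hKs
      intro α
      exact le_trans (Summable.tsum_le_tsum (ttf_norm_le s α) (tt_rows α) (summable_bfun hs α))
        (tsum_bfun_le hs α)
  have hswap : (∑' α : ℕ, (if Odd α then (ArithmeticFunction.moebius α : ℂ) *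
      ∑' d : ℕ, (if Odd d ∧ α ^ 2 ∣ d then
        (Nat.totient d : ℂ) / (d : ℂ) ^ ((1 : ℂ) + s) else 0)
      else 0)) = ∑' n : ℕ, Fsq s n := by
    have step1 : (∑' α : ℕ, (if Odd α then (ArithmeticFunction.moebius α : ℂ) *
        ∑' d : ℕ, (if Odd d ∧ α ^ 2 ∣ d then
          (Nat.totient d : ℂ) / (d : ℂ) ^ ((1 : ℂ) + s) else 0)
        else 0)) = ∑' α : ℕ, ∑' d : ℕ, ttf s α d := by
      apply tsum_congr
      intro α
      by_cases hα : Odd α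
      · rw [if_pos hα, ← tsum_mul_left]
        apply tsum_congr
        intro d
        unfold ttf
        by_cases hd : Odd d ∧ α ^ 2 ∣ d
        · rw [if_pos hd, if_pos ⟨hα, hd.1, hd.2⟩]
        · rw [if_neg hd, mul_zero, if_neg (fun hc => hd ⟨hc.2.1, hc.2.2⟩)]
      · rw [if_neg hα]
        symm
        calc (∑' d : ℕ, ttf s α d) = ∑' _d : ℕ, (0 : ℂ) :=
            tsum_congr fun d => by unfold ttf; exact if_neg (fun hc => hα hc.1)
          _ = 0 := tsum_zero
    have step3 : ∀ d : ℕ, (∑' α : ℕ, ttf s α d) = Fsq s d := by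
      intro d
      by_cases hd : Odd d
      · have hd0 : d ≠ 0 := by rintro rfl; exact (Nat.not_odd_iff_even.mpr Even.zero) hd
        have hstep : ∀ α : ℕ, ttf s α d = (if α ^ 2 ∣ d then (ArithmeticFunction.moebius α : ℂ)
            else 0) * ((Nat.totient d : ℂ) / (d : ℂ) ^ ((1 : ℂ) + s)) := by
          intro α
          unfold ttf
          by_cases h2 : α ^ 2 ∣ d
          · have hαd : α ∣ d := dvd_trans (dvd_pow_self α two_ne_zero) h2
            rw [if_pos ⟨hd.of_dvd_nat hαd, hd, h2⟩, if_pos h2]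
          · rw [if_neg (fun hc => h2 hc.2.2), if_neg h2, zero_mul]
        rw [tsum_congr hstep, tsum_mul_right]
        have hvanish : ∀ α ∉ d.divisors.filter (fun α => α ^ 2 ∣ d),
            (if α ^ 2 ∣ d then (ArithmeticFunction.moebius α : ℂ) else 0) = 0 := by
          intro α hα
          rw [if_neg]
          intro h2
          exact hα (Finset.mem_filter.mpr ⟨Nat.mem_divisors.mpr
            ⟨dvd_trans (dvd_pow_self α two_ne_zero) h2, hd0⟩, h2⟩)
        rw [tsum_eq_sum hvanish]
        have hsum : (∑ α ∈ d.divisors.filter (fun α => α ^ 2 ∣ d),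
            (if α ^ 2 ∣ d then (ArithmeticFunction.moebius α : ℂ) else 0))
            = if Squarefree d then (1 : ℂ) else 0 := by
          have e1 : ∀ α ∈ d.divisors.filter (fun α => α ^ 2 ∣ d),
              (if α ^ 2 ∣ d then (ArithmeticFunction.moebius α : ℂ) else 0)
                = ((ArithmeticFunction.moebius α : ℤ) : ℂ) := fun α hα => by
            rw [if_pos (Finset.mem_filter.mp hα).2]
          rw [Finset.sum_congr rfl e1, ← Int.cast_sum, key_moebius_sq d hd0]
          split <;> simp
        rw [hsum]
        unfold Fsq
        by_cases hsf : Squarefree d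
        · rw [if_pos hsf, if_pos ⟨hsf, hd⟩, one_mul]
        · rw [if_neg hsf, if_neg (fun hc => hsf hc.1), zero_mul]
      · calc (∑' α : ℕ, ttf s α d) = ∑' _α : ℕ, (0 : ℂ) :=
            tsum_congr fun α => by unfold ttf; exact if_neg (fun hc => hd hc.2.1)
        _ = 0 := tsum_zero
        _ = Fsq s d := by unfold Fsq; rw [if_neg (fun hc => hd hc.2)]
    rw [step1, ← Summable.tsum_comm h_unc]
    exact tsum_congr step3
  -- Euler products
  have h1s : 1 < ((1 : ℂ) + s).re := by
    rw [Complex.add_re, Complex.one_re]; linarith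
  have hZ1 := hasProd_Zodd hs
  have hZ2 := hasProd_Zodd h1s
  have hM := hasProd_Modd hs
  have hA := hasProd_Fsq hs
  have hne : ∀ q : {p : ℕ // p.Prime ∧ Odd p}, (1 : ℂ) - (q.1 : ℂ) ^ (-s) ≠ 0 := by
    intro q
    have hq1 : (1 : ℝ) < (q.1 : ℝ) := by exact_mod_cast q.2.1.one_lt
    have hnorm : ‖(q.1 : ℂ) ^ (-s)‖ < 1 := by
      rw [Complex.norm_natCast_cpow_of_pos q.2.1.pos, Complex.neg_re]
      exact Real.rpow_lt_one_of_one_lt_of_neg hq1 (by linarith)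
    intro h
    rw [sub_eq_zero] at h
    rw [← h] at hnorm
    simp at hnorm
  have hCkey : ∀ q : {p : ℕ // p.Prime ∧ Odd p},
      (1 + (Nat.totient q.1 : ℂ) / (q.1 : ℂ) ^ ((1 : ℂ) + s)) * (1 - (q.1 : ℂ) ^ (-s))
        = (1 : ℂ) - (q.1 : ℂ) ^ (-s - 1) - (q.1 : ℂ) ^ (-(2 : ℂ) * s) * (1 - ((q.1 : ℂ))⁻¹) := by
    intro q
    have hQ0 : (q.1 : ℂ) ≠ 0 := Nat.cast_ne_zero.mpr q.2.1.pos.ne'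
    have htot : (Nat.totient q.1 : ℂ) = (q.1 : ℂ) - 1 := by
      rw [Nat.totient_prime q.2.1, Nat.cast_sub q.2.1.one_le, Nat.cast_one]
    have e1 : (q.1 : ℂ) ^ (-s - 1) = (q.1 : ℂ) ^ (-s) * ((q.1 : ℂ))⁻¹ := by
      rw [show -s - 1 = -s + (-1) by ring, Complex.cpow_add _ _ hQ0, Complex.cpow_neg_one]
    have e2 : (q.1 : ℂ) ^ (-(2 : ℂ) * s) = (q.1 : ℂ) ^ (-s) * (q.1 : ℂ) ^ (-s) := by
      rw [show -(2 : ℂ) * s = -s + -s by ring, Complex.cpow_add _ _ hQ0]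
    have e3 : ((q.1 : ℂ) ^ ((1 : ℂ) + s))⁻¹ = ((q.1 : ℂ))⁻¹ * (q.1 : ℂ) ^ (-s) := by
      rw [← Complex.cpow_neg, show -((1 : ℂ) + s) = (-1) + (-s) by ring,
        Complex.cpow_add _ _ hQ0, Complex.cpow_neg_one]
    rw [e1, e2, htot, div_eq_mul_inv, e3]
    field_simp
    ring
  have hC := hA.mul hM
  rw [show (fun q : {p : ℕ // p.Prime ∧ Odd p} =>
      (1 + (Nat.totient q.1 : ℂ) / (q.1 : ℂ) ^ ((1 : ℂ) + s)) * (1 - (q.1 : ℂ) ^ (-s)))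
      = fun q : {p : ℕ // p.Prime ∧ Odd p} =>
        (1 : ℂ) - (q.1 : ℂ) ^ (-s - 1) - (q.1 : ℂ) ^ (-(2 : ℂ) * s) * (1 - ((q.1 : ℂ))⁻¹)
      from funext hCkey] at hC
  rw [show (fun q : {p : ℕ // p.Prime ∧ Odd p} => (1 - (q.1 : ℂ) ^ (-((1 : ℂ) + s)))⁻¹)
      = fun q : {p : ℕ // p.Prime ∧ Odd p} => ((1 : ℂ) - (q.1 : ℂ) ^ (-s - 1))⁻¹
      from funext (fun q => by rw [show -((1 : ℂ) + s) = -s - 1 by ring])] at hZ2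
  have hB := hC.mul hZ2
  have hZM : Zodd s * Modd s = 1 := by
    have h2 := hZ1.mul hM
    rw [show (fun q : {p : ℕ // p.Prime ∧ Odd p} =>
        (1 - (q.1 : ℂ) ^ (-s))⁻¹ * (1 - (q.1 : ℂ) ^ (-s))) = fun _ => (1 : ℂ)
      from funext (fun q => inv_mul_cancel₀ (hne q))] at h2
    exact h2.unique hasProd_one
  refine ⟨fun α _ => part1 α, part2, hB.multipliable, ?_⟩
  rw [hswap, hB.tprod_eq, Zodd_eq h1s,
    show -((1 : ℂ) + s) = -s - 1 by ring]
  have hZM' : ((1 - (2 : ℂ) ^ (-s)) * riemannZeta s) * Modd s = 1 := by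
    rw [← Zodd_eq hs]; exact hZM
  have hζ2 : riemannZeta (1 + s) ≠ 0 := riemannZeta_ne_zero_of_one_lt_re h1s
  have h2ne : (1 : ℂ) - (2 : ℂ) ^ (-s - 1) ≠ 0 := by
    have hn2 : ‖(2 : ℂ) ^ (-s - 1)‖ < 1 := by
      rw [show (2 : ℂ) = ((2 : ℕ) : ℂ) by norm_num,
        Complex.norm_natCast_cpow_of_pos (by norm_num)]
      apply Real.rpow_lt_one_of_one_lt_of_neg (by norm_num)
      rw [Complex.sub_re, Complex.neg_re, Complex.one_re]
      linarith
    intro h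
    rw [sub_eq_zero] at h
    rw [← h] at hn2
    simp at hn2
  field_simp
  linear_combination (-1 : ℂ) * (∑' n : ℕ, Fsq s n) * hZM'
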